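/- In the construction of the reduction lemma: let ω be a nondecreasing function [0,∞) → [0,∞) and (x_n)_{n≥1} a strictly increasing sequence with x_1 = 0, satisfying ω(x_n) ≥ 2^{n-i} ω(x_i) for all 1 ≤ i ≤ n−1 and n ≥ 2. Define ω̃(t) := n ω(t) − Σ_{i=1}^n ω(x_i) for t ∈ [x_n, x_{n+1}). Then (n−2) ω(t) ≤ ω̃(t) ≤ n ω(t) for all n ≥ 2 and t ∈ [x_n, x_{n+1}); in particular ω(t) = o(ω̃(t)) as t → ∞. -/

import Mathlib

open Filter Asymptotics

/-- Sandwich estimate in the reduction lemma: if `ω̃(t) = n ω(t) − Σ_{i=1}^n ω(x_i)` on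
`[x_n, x_{n+1})`, where `ω(x_n) ≥ 2^{n-i} ω(x_i)` for `1 ≤ i ≤ n−1`, then
`(n−2) ω(t) ≤ ω̃(t) ≤ n ω(t)` for `n ≥ 2`, and hence `ω = o(ω̃)` at infinity. -/
theorem stmt16 (ω : ℝ → ℝ)
    (hmono : MonotoneOn ω (Set.Ici 0)) (hnn : ∀ t, 0 ≤ t → 0 ≤ ω t)
    (htop : Tendsto ω atTop atTop)
    (x : ℕ → ℝ) (hx1 : x 1 = 0)
    (hxs : ∀ n : ℕ, 1 ≤ n → x n < x (n + 1))
    (hxtop : Tendsto x atTop atTop)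
    (hgrow : ∀ n : ℕ, 2 ≤ n → ∀ i : ℕ, 1 ≤ i → i ≤ n - 1 →
      (2 : ℝ) ^ (n - i) * ω (x i) ≤ ω (x n))
    (ωt : ℝ → ℝ)
    (hωt : ∀ n : ℕ, 1 ≤ n → ∀ t : ℝ, x n ≤ t → t < x (n + 1) →
      ωt t = (n : ℝ) * ω t - ∑ i ∈ Finset.Icc 1 n, ω (x i)) :
    (∀ n : ℕ, 2 ≤ n → ∀ t : ℝ, x n ≤ t → t < x (n + 1) →
      ((n : ℝ) - 2) * ω t ≤ ωt t ∧ ωt t ≤ (n : ℝ) * ω t) ∧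
    ω =o[atTop] ωt := by
  classical
  -- monotonicity of x on [1,∞)
  have hxmono : ∀ i j : ℕ, 1 ≤ i → i ≤ j → x i ≤ x j := by
    intro i j hi hij
    induction j with
    | zero => omega
    | succ k ih =>
      rcases Nat.lt_or_ge i (k+1) with h | h
      · have hik : i ≤ k := by omega
        have h1k : 1 ≤ k := by omega
        exact (ih hik).trans (hxs k h1k).le
      · have : i = k + 1 := by omega
        rw [this]
  have hx0 : ∀ n : ℕ, 1 ≤ n → 0 ≤ x n := fun n hn => hx1 ▸ hxmono 1 n le_rfl hn
  -- sandwich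
  have sand : ∀ n : ℕ, 2 ≤ n → ∀ t : ℝ, x n ≤ t → t < x (n + 1) →
      ((n : ℝ) - 2) * ω t ≤ ωt t ∧ ωt t ≤ (n : ℝ) * ω t := by
    intro n hn t ht ht'
    have hn1 : 1 ≤ n := by omega
    have hxn0 : 0 ≤ x n := hx0 n hn1
    have ht0 : 0 ≤ t := hxn0.trans ht
    have hωxn : ω (x n) ≤ ω t := hmono hxn0 ht0 ht
    have hωxn0 : 0 ≤ ω (x n) := hnn _ hxn0
    have hωt0 : 0 ≤ ω t := hnn _ ht0
    have hsum_nn : 0 ≤ ∑ i ∈ Finset.Icc 1 n, ω (x i) :=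
      Finset.sum_nonneg fun i hi => hnn _ (hx0 i (Finset.mem_Icc.mp hi).1)
    -- each term bound
    have hterm : ∀ i ∈ Finset.Icc 1 n, ω (x i) ≤ (1/2 : ℝ) ^ (n - i) * ω (x n) := by
      intro i hi
      obtain ⟨hi1, hin⟩ := Finset.mem_Icc.mp hi
      rcases eq_or_lt_of_le hin with rfl | hilt
      · simp
      · have h := hgrow n hn i hi1 (by omega)
        have hpow : (0:ℝ) < (2:ℝ) ^ (n - i) := by positivity
        rw [div_pow, one_pow, div_mul_eq_mul_div, le_div_iff₀ hpow, mul_comm]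
        linarith
    have hsum : ∑ i ∈ Finset.Icc 1 n, ω (x i) ≤ 2 * ω (x n) := by
      calc ∑ i ∈ Finset.Icc 1 n, ω (x i)
          ≤ ∑ i ∈ Finset.Icc 1 n, (1/2 : ℝ) ^ (n - i) * ω (x n) :=
            Finset.sum_le_sum hterm
        _ = (∑ i ∈ Finset.Icc 1 n, (1/2 : ℝ) ^ (n - i)) * ω (x n) := by
            rw [Finset.sum_mul]
        _ ≤ 2 * ω (x n) := by
            apply mul_le_mul_of_nonneg_right _ hωxn0
            have : ∑ i ∈ Finset.Icc 1 n, (1/2 : ℝ) ^ (n - i)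
                = ∑ j ∈ Finset.range n, (1/2 : ℝ) ^ (n - (1 + j)) := by
              have : Finset.Icc 1 n = Finset.Ico 1 (n+1) := by
                rw [Finset.Ico_add_one_right_eq_Icc]
              rw [this, Finset.sum_Ico_eq_sum_range]
              simp
            rw [this]
            have h2 : ∑ j ∈ Finset.range n, (1/2 : ℝ) ^ (n - (1 + j))
                = ∑ j ∈ Finset.range n, (1/2 : ℝ) ^ j := by
              rw [← Finset.sum_range_reflect]
              apply Finset.sum_congr rfl
              intro j hj
              have hj' := Finset.mem_range.mp hj
              congr 1
              omega
            rw [h2]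
            exact sum_geometric_two_le n
    rw [hωt n hn1 t ht ht']
    constructor
    · have : ∑ i ∈ Finset.Icc 1 n, ω (x i) ≤ 2 * ω t :=
        hsum.trans (by nlinarith)
      nlinarith
    · nlinarith
  refine ⟨sand, ?_⟩
  rw [isLittleO_iff]
  intro c hc
  obtain ⟨n, hn3, hnc⟩ : ∃ n : ℕ, 3 ≤ n ∧ 1 ≤ c * ((n:ℝ) - 2) := by
    refine ⟨max 3 ⌈2 + 1/c⌉₊, le_max_left _ _, ?_⟩
    have h1 : (2 + 1/c : ℝ) ≤ (⌈2 + 1/c⌉₊ : ℝ) := Nat.le_ceil _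
    have h2 : (⌈2 + 1/c⌉₊ : ℝ) ≤ ((max 3 ⌈2 + 1/c⌉₊ : ℕ) : ℝ) := by
      exact_mod_cast le_max_right 3 _
    have h3 : 1/c ≤ ((max 3 ⌈2 + 1/c⌉₊ : ℕ) : ℝ) - 2 := by linarith
    calc (1:ℝ) = c * (1/c) := by field_simp
      _ ≤ c * (((max 3 ⌈2 + 1/c⌉₊ : ℕ) : ℝ) - 2) := by
          exact mul_le_mul_of_nonneg_left h3 hc.le
  filter_upwards [eventually_ge_atTop (x n)] with t ht
  have hxtop' : ∀ᶠ k in atTop, t < x k := hxtop.eventually_gt_atTop t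
  obtain ⟨N, hN⟩ := eventually_atTop.mp hxtop'
  have hnN : n ≤ N := by
    by_contra h
    push_neg at h
    exact absurd ht (not_le.mpr (hN n h.le))
  set m := Nat.findGreatest (fun k => x k ≤ t) N with hm
  have hm1 : x m ≤ t := by
    rw [hm]; exact Nat.findGreatest_spec (P := fun k => x k ≤ t) hnN ht
  have hmn : n ≤ m := Nat.le_findGreatest hnN ht
  have hm2 : t < x (m + 1) := by
    rcases le_or_gt N (m + 1) with h | h
    · exact hN (m + 1) h
    · have := Nat.findGreatest_is_greatest (P := fun k => x k ≤ t)
        (Nat.lt_succ_self m) h.le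
      exact not_le.mp this
  obtain ⟨hlo, _⟩ := sand m (by omega) t hm1 hm2
  have ht0 : 0 ≤ t := (hx0 n (by omega)).trans ht
  have hωt0 : 0 ≤ ω t := hnn t ht0
  have hm2R : (1:ℝ) ≤ (m:ℝ) - 2 := by
    have : (3:ℝ) ≤ (m:ℝ) := by exact_mod_cast hn3.trans hmn
    linarith
  have hωtnn : 0 ≤ ωt t := le_trans (by nlinarith) hlo
  rw [Real.norm_of_nonneg hωt0, Real.norm_of_nonneg hωtnn]
  have hnm : ((n:ℝ) - 2) ≤ ((m:ℝ) - 2) := by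
    have : (n:ℝ) ≤ (m:ℝ) := by exact_mod_cast hmn
    linarith
  calc ω t = 1 * ω t := (one_mul _).symm
    _ ≤ (c * ((m:ℝ) - 2)) * ω t := by
        apply mul_le_mul_of_nonneg_right _ hωt0
        exact hnc.trans (mul_le_mul_of_nonneg_left hnm hc.le)
    _ = c * (((m:ℝ) - 2) * ω t) := by ring
    _ ≤ c * ωt t := mul_le_mul_of_nonneg_left hlo hc.le
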